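/- Let X, Y, Z, T be random variables on a finite probability space with positive joint distribution. If either (i) X ⫫ Z | T and Y ⫫ T | (Z, X), or (ii) X ⫫ T | Z and Y ⫫ Z | (T, X), then Z and T are c-equivalent relative to (X, Y), i.e. for all values x, y: ∑_z P(y | x, z) P(Z = z) = ∑_t P(y | x, t) P(T = t). -/

import Mathlib

open scoped Classical

/-- The probability of the event `A` under the pmf `w` on a finite sample space. -/
noncomputable def Pr {Ω : Type*} [Fintype Ω] (w : Ω → ℝ) (A : Set Ω) : ℝ :=
  ∑ ω, if ω ∈ A then w ω else 0

/-- Conditional independence `A ⫫ B | C` of random variables under the pmf `w`: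
`P(A = a, B = b | C = c) = P(A = a | C = c) · P(B = b | C = c)` for all values. -/
def CondIndepRV {Ω A' B' C' : Type*} [Fintype Ω] (w : Ω → ℝ)
    (A : Ω → A') (B : Ω → B') (C : Ω → C') : Prop :=
  ∀ (a : A') (b : B') (c : C'),
    Pr w {ω | A ω = a ∧ B ω = b ∧ C ω = c} / Pr w {ω | C ω = c} =
      (Pr w {ω | A ω = a ∧ C ω = c} / Pr w {ω | C ω = c}) *
      (Pr w {ω | B ω = b ∧ C ω = c} / Pr w {ω | C ω = c})

lemma Pr_congr' {Ω : Type*} [Fintype Ω] (w : Ω → ℝ) {p q : Ω → Prop} (h : ∀ ω, p ω ↔ q ω) :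
    Pr w {ω | p ω} = Pr w {ω | q ω} := by
  simp only [Pr, Set.mem_setOf_eq]
  exact Finset.sum_congr rfl fun ω _ => by simp only [h ω]

lemma Pr_split' {Ω β : Type*} [Fintype Ω] [Fintype β] (w : Ω → ℝ) (p : Ω → Prop) (g : Ω → β) :
    Pr w {ω | p ω} = ∑ b, Pr w {ω | p ω ∧ g ω = b} := by
  simp only [Pr, Set.mem_setOf_eq]
  rw [Finset.sum_comm]
  refine Finset.sum_congr rfl fun ω _ => ?_
  by_cases hp : p ω <;> simp [hp]

lemma sum_pos'' {ι : Type*} [Fintype ι] [Nonempty ι] {g : ι → ℝ} (h : ∀ i, 0 < g i) :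
    0 < ∑ i, g i := Finset.sum_pos (fun i _ => h i) Finset.univ_nonempty

lemma key_cequiv {𝒳 𝒴 𝒵 𝒯 : Type*} [Fintype 𝒳] [Fintype 𝒴] [Fintype 𝒵] [Fintype 𝒯]
    [Nonempty 𝒳] [Nonempty 𝒴] [Nonempty 𝒵] [Nonempty 𝒯]
    (f : 𝒳 → 𝒴 → 𝒵 → 𝒯 → ℝ) (hf : ∀ x y z t, 0 < f x y z t)
    (h1 : ∀ x z t, (∑ y', f x y' z t) * (∑ x', ∑ y', ∑ z', f x' y' z' t)
        = (∑ y', ∑ z', f x y' z' t) * (∑ x', ∑ y', f x' y' z t))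
    (h2 : ∀ x y z t, f x y z t * (∑ y', ∑ t', f x y' z t')
        = (∑ t', f x y z t') * (∑ y', f x y' z t))
    (x : 𝒳) (y : 𝒴) :
    (∑ z, (∑ t, f x y z t) / (∑ y', ∑ t', f x y' z t') * (∑ x', ∑ y', ∑ t', f x' y' z t'))
    = ∑ t, (∑ z, f x y z t) / (∑ y', ∑ z', f x y' z' t) * (∑ x', ∑ y', ∑ z', f x' y' z' t) := by
  have hPxz : ∀ z, 0 < ∑ y', ∑ t', f x y' z t' :=
    fun z => sum_pos'' fun y' => sum_pos'' fun t' => hf _ _ _ _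
  have hPxt : ∀ t, 0 < ∑ y', ∑ z', f x y' z' t :=
    fun t => sum_pos'' fun y' => sum_pos'' fun z' => hf _ _ _ _
  have hstar : ∀ z t, f x y z t * ((∑ y', ∑ t', f x y' z t') * (∑ x', ∑ y', ∑ z', f x' y' z' t))
      = (∑ t', f x y z t') * ((∑ y', ∑ z', f x y' z' t) * (∑ x', ∑ y', f x' y' z t)) := by
    intro z t
    linear_combination (∑ x', ∑ y', ∑ z', f x' y' z' t) * h2 x y z t
      + (∑ t', f x y z t') * h1 x z t
  have main : ∀ z t, f x y z t * (∑ x', ∑ y', ∑ z', f x' y' z' t) / (∑ y', ∑ z', f x y' z' t)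
      = (∑ t', f x y z t') * (∑ x', ∑ y', f x' y' z t) / (∑ y', ∑ t', f x y' z t') := by
    intro z t
    rw [div_eq_div_iff (hPxt t).ne' (hPxz z).ne']
    linear_combination hstar z t
  have hPz : ∀ z, (∑ x', ∑ y', ∑ t', f x' y' z t') = ∑ t, ∑ x', ∑ y', f x' y' z t := by
    intro z
    rw [Finset.sum_congr rfl fun x' (_ : x' ∈ Finset.univ) =>
      (Finset.sum_comm : (∑ y', ∑ t', f x' y' z t') = ∑ t', ∑ y', f x' y' z t')]
    exact Finset.sum_comm
  calc (∑ z, (∑ t, f x y z t) / (∑ y', ∑ t', f x y' z t') * (∑ x', ∑ y', ∑ t', f x' y' z t'))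
      = ∑ z, ∑ t, (∑ t', f x y z t') * (∑ x', ∑ y', f x' y' z t) / (∑ y', ∑ t', f x y' z t') := by
        refine Finset.sum_congr rfl fun z _ => ?_
        rw [hPz z, Finset.mul_sum]
        exact Finset.sum_congr rfl fun t _ => by ring
    _ = ∑ z, ∑ t, f x y z t * (∑ x', ∑ y', ∑ z', f x' y' z' t) / (∑ y', ∑ z', f x y' z' t) :=
        Finset.sum_congr rfl fun z _ => Finset.sum_congr rfl fun t _ => (main z t).symm
    _ = ∑ t, ∑ z, f x y z t * (∑ x', ∑ y', ∑ z', f x' y' z' t) / (∑ y', ∑ z', f x y' z' t) :=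
        Finset.sum_comm
    _ = ∑ t, (∑ z, f x y z t) / (∑ y', ∑ z', f x y' z' t) * (∑ x', ∑ y', ∑ z', f x' y' z' t) := by
        refine Finset.sum_congr rfl fun t _ => ?_
        rw [← Finset.sum_div, ← Finset.sum_mul]
        ring

/-- **Probabilistic criteria for c-equivalence.** If (i) `X ⫫ Z | T` and
`Y ⫫ T | (Z, X)`, or (ii) `X ⫫ T | Z` and `Y ⫫ Z | (T, X)`, then `Z` and `T` are
c-equivalent relative to `(X, Y)`:
`∑ z, P(y | x, z) P(Z = z) = ∑ t, P(y | x, t) P(T = t)` for all `x`, `y`. -/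
theorem stmt_2 {Ω 𝒳 𝒴 𝒵 𝒯 : Type*} [Fintype Ω]
    [Fintype 𝒳] [Fintype 𝒴] [Fintype 𝒵] [Fintype 𝒯]
    (w : Ω → ℝ) (hw0 : ∀ ω, 0 ≤ w ω) (hw1 : ∑ ω, w ω = 1)
    (X : Ω → 𝒳) (Y : Ω → 𝒴) (Z : Ω → 𝒵) (T : Ω → 𝒯)
    (hpos : ∀ (x : 𝒳) (y : 𝒴) (z : 𝒵) (t : 𝒯),
      0 < Pr w {ω | X ω = x ∧ Y ω = y ∧ Z ω = z ∧ T ω = t})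
    (h : (CondIndepRV w X Z T ∧ CondIndepRV w Y T (fun ω => (Z ω, X ω))) ∨
         (CondIndepRV w X T Z ∧ CondIndepRV w Y Z (fun ω => (T ω, X ω)))) :
    ∀ (x : 𝒳) (y : 𝒴),
      (∑ z : 𝒵,
          (Pr w {ω | Y ω = y ∧ X ω = x ∧ Z ω = z} / Pr w {ω | X ω = x ∧ Z ω = z}) *
            Pr w {ω | Z ω = z}) =
      ∑ t : 𝒯,
          (Pr w {ω | Y ω = y ∧ X ω = x ∧ T ω = t} / Pr w {ω | X ω = x ∧ T ω = t}) *
            Pr w {ω | T ω = t} := by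
  intro x y
  rcases isEmpty_or_nonempty Ω with hΩ | hΩ
  · simp [Pr]
  haveI : Nonempty 𝒳 := ⟨X (Classical.arbitrary Ω)⟩
  haveI : Nonempty 𝒴 := ⟨Y (Classical.arbitrary Ω)⟩
  haveI : Nonempty 𝒵 := ⟨Z (Classical.arbitrary Ω)⟩
  haveI : Nonempty 𝒯 := ⟨T (Classical.arbitrary Ω)⟩
  -- marginalization lemmas
  have M1 : ∀ t, Pr w {ω | T ω = t}
      = ∑ x', ∑ y', ∑ z', Pr w {ω | X ω = x' ∧ Y ω = y' ∧ Z ω = z' ∧ T ω = t} := by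
    intro t
    rw [Pr_split' w (fun ω => T ω = t) X]
    refine Finset.sum_congr rfl fun x' _ => ?_
    rw [Pr_split' w _ Y]
    refine Finset.sum_congr rfl fun y' _ => ?_
    rw [Pr_split' w _ Z]
    exact Finset.sum_congr rfl fun z' _ => Pr_congr' w fun ω => by tauto
  have M2 : ∀ x' t, Pr w {ω | X ω = x' ∧ T ω = t}
      = ∑ y', ∑ z', Pr w {ω | X ω = x' ∧ Y ω = y' ∧ Z ω = z' ∧ T ω = t} := by
    intro x' t
    rw [Pr_split' w (fun ω => X ω = x' ∧ T ω = t) Y]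
    refine Finset.sum_congr rfl fun y' _ => ?_
    rw [Pr_split' w _ Z]
    exact Finset.sum_congr rfl fun z' _ => Pr_congr' w fun ω => by tauto
  have M3 : ∀ z t, Pr w {ω | Z ω = z ∧ T ω = t}
      = ∑ x', ∑ y', Pr w {ω | X ω = x' ∧ Y ω = y' ∧ Z ω = z ∧ T ω = t} := by
    intro z t
    rw [Pr_split' w (fun ω => Z ω = z ∧ T ω = t) X]
    refine Finset.sum_congr rfl fun x' _ => ?_
    rw [Pr_split' w _ Y]
    exact Finset.sum_congr rfl fun y' _ => Pr_congr' w fun ω => by tauto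
  have M4 : ∀ x' z t, Pr w {ω | X ω = x' ∧ Z ω = z ∧ T ω = t}
      = ∑ y', Pr w {ω | X ω = x' ∧ Y ω = y' ∧ Z ω = z ∧ T ω = t} := by
    intro x' z t
    rw [Pr_split' w (fun ω => X ω = x' ∧ Z ω = z ∧ T ω = t) Y]
    exact Finset.sum_congr rfl fun y' _ => Pr_congr' w fun ω => by tauto
  have M5 : ∀ z x', Pr w {ω | (Z ω, X ω) = (z, x')}
      = ∑ y', ∑ t', Pr w {ω | X ω = x' ∧ Y ω = y' ∧ Z ω = z ∧ T ω = t'} := by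
    intro z x'
    rw [Pr_split' w (fun ω => (Z ω, X ω) = (z, x')) Y]
    refine Finset.sum_congr rfl fun y' _ => ?_
    rw [Pr_split' w _ T]
    exact Finset.sum_congr rfl fun t' _ => Pr_congr' w fun ω => by
      simp only [Prod.mk.injEq]; tauto
  have M6 : ∀ y' z x', Pr w {ω | Y ω = y' ∧ (Z ω, X ω) = (z, x')}
      = ∑ t', Pr w {ω | X ω = x' ∧ Y ω = y' ∧ Z ω = z ∧ T ω = t'} := by
    intro y' z x'
    rw [Pr_split' w (fun ω => Y ω = y' ∧ (Z ω, X ω) = (z, x')) T]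
    exact Finset.sum_congr rfl fun t' _ => Pr_congr' w fun ω => by
      simp only [Prod.mk.injEq]; tauto
  have M7 : ∀ t z x', Pr w {ω | T ω = t ∧ (Z ω, X ω) = (z, x')}
      = ∑ y', Pr w {ω | X ω = x' ∧ Y ω = y' ∧ Z ω = z ∧ T ω = t} := by
    intro t z x'
    rw [Pr_split' w (fun ω => T ω = t ∧ (Z ω, X ω) = (z, x')) Y]
    exact Finset.sum_congr rfl fun y' _ => Pr_congr' w fun ω => by
      simp only [Prod.mk.injEq]; tauto
  have M8 : ∀ y' t z x', Pr w {ω | Y ω = y' ∧ T ω = t ∧ (Z ω, X ω) = (z, x')}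
      = Pr w {ω | X ω = x' ∧ Y ω = y' ∧ Z ω = z ∧ T ω = t} := by
    intro y' t z x'
    exact Pr_congr' w fun ω => by simp only [Prod.mk.injEq]; tauto
  have M9 : ∀ z, Pr w {ω | Z ω = z}
      = ∑ x', ∑ y', ∑ t', Pr w {ω | X ω = x' ∧ Y ω = y' ∧ Z ω = z ∧ T ω = t'} := by
    intro z
    rw [Pr_split' w (fun ω => Z ω = z) X]
    refine Finset.sum_congr rfl fun x' _ => ?_
    rw [Pr_split' w _ Y]
    refine Finset.sum_congr rfl fun y' _ => ?_
    rw [Pr_split' w _ T]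
    exact Finset.sum_congr rfl fun t' _ => Pr_congr' w fun ω => by tauto
  have M10 : ∀ x' z, Pr w {ω | X ω = x' ∧ Z ω = z}
      = ∑ y', ∑ t', Pr w {ω | X ω = x' ∧ Y ω = y' ∧ Z ω = z ∧ T ω = t'} := by
    intro x' z
    rw [Pr_split' w (fun ω => X ω = x' ∧ Z ω = z) Y]
    refine Finset.sum_congr rfl fun y' _ => ?_
    rw [Pr_split' w _ T]
    exact Finset.sum_congr rfl fun t' _ => Pr_congr' w fun ω => by tauto
  have M11 : ∀ y' x' z, Pr w {ω | Y ω = y' ∧ X ω = x' ∧ Z ω = z}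
      = ∑ t', Pr w {ω | X ω = x' ∧ Y ω = y' ∧ Z ω = z ∧ T ω = t'} := by
    intro y' x' z
    rw [Pr_split' w (fun ω => Y ω = y' ∧ X ω = x' ∧ Z ω = z) T]
    exact Finset.sum_congr rfl fun t' _ => Pr_congr' w fun ω => by tauto
  have M12 : ∀ y' x' t, Pr w {ω | Y ω = y' ∧ X ω = x' ∧ T ω = t}
      = ∑ z', Pr w {ω | X ω = x' ∧ Y ω = y' ∧ Z ω = z' ∧ T ω = t} := by
    intro y' x' t
    rw [Pr_split' w (fun ω => Y ω = y' ∧ X ω = x' ∧ T ω = t) Z]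
    exact Finset.sum_congr rfl fun z' _ => Pr_congr' w fun ω => by tauto
  have hposT : ∀ t, (0:ℝ) < ∑ x', ∑ y', ∑ z',
      Pr w {ω | X ω = x' ∧ Y ω = y' ∧ Z ω = z' ∧ T ω = t} :=
    fun t => sum_pos'' fun x' => sum_pos'' fun y' => sum_pos'' fun z' => hpos _ _ _ _
  have hposZ : ∀ z, (0:ℝ) < ∑ x', ∑ y', ∑ t',
      Pr w {ω | X ω = x' ∧ Y ω = y' ∧ Z ω = z ∧ T ω = t'} :=
    fun z => sum_pos'' fun x' => sum_pos'' fun y' => sum_pos'' fun t' => hpos _ _ _ _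
  have hposXZ : ∀ x' z, (0:ℝ) < ∑ y', ∑ t',
      Pr w {ω | X ω = x' ∧ Y ω = y' ∧ Z ω = z ∧ T ω = t'} :=
    fun x' z => sum_pos'' fun y' => sum_pos'' fun t' => hpos _ _ _ _
  have hposXT : ∀ x' t, (0:ℝ) < ∑ y', ∑ z',
      Pr w {ω | X ω = x' ∧ Y ω = y' ∧ Z ω = z' ∧ T ω = t} :=
    fun x' t => sum_pos'' fun y' => sum_pos'' fun z' => hpos _ _ _ _
  simp only [M11, M10, M9, M12, M2, M1]
  rcases h with ⟨hI1, hI2⟩ | ⟨hI1, hI2⟩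
  · -- case (i): X ⫫ Z | T and Y ⫫ T | (Z, X)
    have h1c : ∀ x' z t,
        (∑ y', Pr w {ω | X ω = x' ∧ Y ω = y' ∧ Z ω = z ∧ T ω = t}) *
          (∑ x'', ∑ y', ∑ z', Pr w {ω | X ω = x'' ∧ Y ω = y' ∧ Z ω = z' ∧ T ω = t}) =
        (∑ y', ∑ z', Pr w {ω | X ω = x' ∧ Y ω = y' ∧ Z ω = z' ∧ T ω = t}) *
          (∑ x'', ∑ y', Pr w {ω | X ω = x'' ∧ Y ω = y' ∧ Z ω = z ∧ T ω = t}) := by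
      intro x' z t
      have e := hI1 x' z t
      rw [M4, M1, M2, M3] at e
      have hp := (hposT t).ne'
      field_simp at e
      linear_combination e
    have h2c : ∀ x' y' z t,
        Pr w {ω | X ω = x' ∧ Y ω = y' ∧ Z ω = z ∧ T ω = t} *
          (∑ y'', ∑ t', Pr w {ω | X ω = x' ∧ Y ω = y'' ∧ Z ω = z ∧ T ω = t'}) =
        (∑ t', Pr w {ω | X ω = x' ∧ Y ω = y' ∧ Z ω = z ∧ T ω = t'}) *
          (∑ y'', Pr w {ω | X ω = x' ∧ Y ω = y'' ∧ Z ω = z ∧ T ω = t}) := by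
      intro x' y' z t
      have e := hI2 y' t (z, x')
      beta_reduce at e
      rw [M8, M5, M6, M7] at e
      have hp := (hposXZ x' z).ne'
      field_simp at e
      linear_combination e
    exact key_cequiv
      (fun x' y' z' t' => Pr w {ω | X ω = x' ∧ Y ω = y' ∧ Z ω = z' ∧ T ω = t'})
      hpos h1c h2c x y
  · -- case (ii): X ⫫ T | Z and Y ⫫ Z | (T, X)
    have M13 : ∀ x' t z, Pr w {ω | X ω = x' ∧ T ω = t ∧ Z ω = z}
        = ∑ y', Pr w {ω | X ω = x' ∧ Y ω = y' ∧ Z ω = z ∧ T ω = t} := by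
      intro x' t z
      rw [Pr_split' w (fun ω => X ω = x' ∧ T ω = t ∧ Z ω = z) Y]
      exact Finset.sum_congr rfl fun y' _ => Pr_congr' w fun ω => by tauto
    have M14 : ∀ t z, Pr w {ω | T ω = t ∧ Z ω = z}
        = ∑ x', ∑ y', Pr w {ω | X ω = x' ∧ Y ω = y' ∧ Z ω = z ∧ T ω = t} := by
      intro t z
      rw [Pr_split' w (fun ω => T ω = t ∧ Z ω = z) X]
      refine Finset.sum_congr rfl fun x' _ => ?_
      rw [Pr_split' w _ Y]
      exact Finset.sum_congr rfl fun y' _ => Pr_congr' w fun ω => by tauto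
    have M15 : ∀ t x', Pr w {ω | (T ω, X ω) = (t, x')}
        = ∑ y', ∑ z', Pr w {ω | X ω = x' ∧ Y ω = y' ∧ Z ω = z' ∧ T ω = t} := by
      intro t x'
      rw [Pr_split' w (fun ω => (T ω, X ω) = (t, x')) Y]
      refine Finset.sum_congr rfl fun y' _ => ?_
      rw [Pr_split' w _ Z]
      exact Finset.sum_congr rfl fun z' _ => Pr_congr' w fun ω => by
        simp only [Prod.mk.injEq]; tauto
    have M16 : ∀ y' t x', Pr w {ω | Y ω = y' ∧ (T ω, X ω) = (t, x')}
        = ∑ z', Pr w {ω | X ω = x' ∧ Y ω = y' ∧ Z ω = z' ∧ T ω = t} := by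
      intro y' t x'
      rw [Pr_split' w (fun ω => Y ω = y' ∧ (T ω, X ω) = (t, x')) Z]
      exact Finset.sum_congr rfl fun z' _ => Pr_congr' w fun ω => by
        simp only [Prod.mk.injEq]; tauto
    have M17 : ∀ z t x', Pr w {ω | Z ω = z ∧ (T ω, X ω) = (t, x')}
        = ∑ y', Pr w {ω | X ω = x' ∧ Y ω = y' ∧ Z ω = z ∧ T ω = t} := by
      intro z t x'
      rw [Pr_split' w (fun ω => Z ω = z ∧ (T ω, X ω) = (t, x')) Y]
      exact Finset.sum_congr rfl fun y' _ => Pr_congr' w fun ω => by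
        simp only [Prod.mk.injEq]; tauto
    have M18 : ∀ y' z t x', Pr w {ω | Y ω = y' ∧ Z ω = z ∧ (T ω, X ω) = (t, x')}
        = Pr w {ω | X ω = x' ∧ Y ω = y' ∧ Z ω = z ∧ T ω = t} := by
      intro y' z t x'
      exact Pr_congr' w fun ω => by simp only [Prod.mk.injEq]; tauto
    have h1c : ∀ x' t z,
        (∑ y', Pr w {ω | X ω = x' ∧ Y ω = y' ∧ Z ω = z ∧ T ω = t}) *
          (∑ x'', ∑ y', ∑ t', Pr w {ω | X ω = x'' ∧ Y ω = y' ∧ Z ω = z ∧ T ω = t'}) =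
        (∑ y', ∑ t', Pr w {ω | X ω = x' ∧ Y ω = y' ∧ Z ω = z ∧ T ω = t'}) *
          (∑ x'', ∑ y', Pr w {ω | X ω = x'' ∧ Y ω = y' ∧ Z ω = z ∧ T ω = t}) := by
      intro x' t z
      have e := hI1 x' t z
      rw [M13, M9, M10, M14] at e
      have hp := (hposZ z).ne'
      field_simp at e
      linear_combination e
    have h2c : ∀ x' y' t z,
        Pr w {ω | X ω = x' ∧ Y ω = y' ∧ Z ω = z ∧ T ω = t} *
          (∑ y'', ∑ z', Pr w {ω | X ω = x' ∧ Y ω = y'' ∧ Z ω = z' ∧ T ω = t}) =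
        (∑ z', Pr w {ω | X ω = x' ∧ Y ω = y' ∧ Z ω = z' ∧ T ω = t}) *
          (∑ y'', Pr w {ω | X ω = x' ∧ Y ω = y'' ∧ Z ω = z ∧ T ω = t}) := by
      intro x' y' t z
      have e := hI2 y' z (t, x')
      beta_reduce at e
      rw [M18, M15, M16, M17] at e
      have hp := (hposXT x' t).ne'
      field_simp at e
      linear_combination e
    exact (key_cequiv
      (fun x' y' t' z' => Pr w {ω | X ω = x' ∧ Y ω = y' ∧ Z ω = z' ∧ T ω = t'})
      (fun a b c d => hpos a b d c) h1c h2c x y).symm
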